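/- Let 0 ≤ a < b ≤ 1 be constants, and let X_1, ..., X_n be Boolean random variables satisfying Pr[∀ i ∈ S, X_i = 1] ≤ a^{|S|} for every subset S ⊆ {1,...,n}. Then Pr[∑ X_i ≥ n(a+b)/2] ≤ e^{-n(b-a)²/2}. -/

import Mathlib

open MeasureTheory Real


-- Hoeffding's lemma for Bernoulli: 1 - a + a * e^t ≤ exp (t*a + t^2/8)
theorem bern_mgf_le (a : ℝ) (ha : 0 ≤ a) (ha1 : a ≤ 1) (t : ℝ) (ht : 0 ≤ t) :
    1 - a + a * Real.exp t ≤ Real.exp (t * a + t ^ 2 / 8) := by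
  set D : ℝ → ℝ := fun s => 1 - a + a * Real.exp s with hD
  have hDpos : ∀ s, 0 < D s := by
    intro s
    rcases lt_or_eq_of_le ha1 with h1 | h1
    · have : 0 < 1 - a := by linarith
      have : 0 ≤ a * Real.exp s := mul_nonneg ha (Real.exp_pos s).le
      simp only [hD]; linarith
    · simp only [hD, h1]
      have := Real.exp_pos s; linarith
  -- second derivative bound: for all s, the deriv of g₂ is nonneg
  set g₂ : ℝ → ℝ := fun s => a + s / 4 - a * Real.exp s / D s with hg₂
  have hDderiv : ∀ s, HasDerivAt D (a * Real.exp s) s := by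
    intro s
    have : HasDerivAt (fun s : ℝ => a * Real.exp s) (a * Real.exp s) s :=
      (Real.hasDerivAt_exp s).const_mul a
    simpa [hD] using (this.const_add (1 - a))
  have hg₂deriv : ∀ s, HasDerivAt g₂ (1 / 4 - a * Real.exp s * (1 - a) / (D s) ^ 2) s := by
    intro s
    have h1 : HasDerivAt (fun s : ℝ => a * Real.exp s) (a * Real.exp s) s :=
      (Real.hasDerivAt_exp s).const_mul a
    have h2 : HasDerivAt (fun s : ℝ => a * Real.exp s / D s)
        ((a * Real.exp s * D s - a * Real.exp s * (a * Real.exp s)) / (D s) ^ 2) s :=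
      h1.div (hDderiv s) (hDpos s).ne'
    have h3 : HasDerivAt (fun s : ℝ => a + s / 4) (1 / 4) s := by
      simpa using ((hasDerivAt_id s).div_const 4).const_add a
    have h4 := h3.sub h2
    refine h4.congr_deriv ?_
    have : a * Real.exp s * D s - a * Real.exp s * (a * Real.exp s)
        = a * Real.exp s * (1 - a) := by simp only [hD]; ring
    rw [this]
  have hg₂nonneg : ∀ s, 0 ≤ s → 0 ≤ g₂ s := by
    have mono : MonotoneOn g₂ (Set.Ici (0:ℝ)) := by
      apply monotoneOn_of_deriv_nonneg (convex_Ici 0)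
      · exact Continuous.continuousOn (by
          fun_prop (disch := exact fun s => (hDpos s).ne'))
      · intro s _
        exact (hg₂deriv s).differentiableAt.differentiableWithinAt
      · intro s _
        rw [(hg₂deriv s).deriv, sub_nonneg, div_le_iff₀ (pow_pos (hDpos s) 2)]
        have hDs : D s = 1 - a + a * Real.exp s := rfl
        rw [hDs]
        nlinarith [sq_nonneg (a * Real.exp s - (1 - a)), Real.exp_pos s]
    intro s hs
    have h0 : g₂ 0 = 0 := by
      simp only [hg₂, hD, Real.exp_zero, mul_one]
      field_simp
      ring
    have := mono (Set.self_mem_Ici) (Set.mem_Ici.2 hs) hs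
    rwa [h0] at this
  -- now first derivative
  set g₁ : ℝ → ℝ := fun s => s * a + s ^ 2 / 8 - Real.log (D s) with hg₁
  have hg₁deriv : ∀ s, HasDerivAt g₁ (g₂ s) s := by
    intro s
    have hlog : HasDerivAt (fun s => Real.log (D s)) (a * Real.exp s / D s) s :=
      (hDderiv s).log (hDpos s).ne'
    have hpoly : HasDerivAt (fun s : ℝ => s * a + s ^ 2 / 8) (a + s / 4) s := by
      have h1 : HasDerivAt (fun s : ℝ => s * a) a s := by
        simpa using (hasDerivAt_id s).mul_const a
      have h2 : HasDerivAt (fun s : ℝ => s ^ 2 / 8) (s / 4) s := by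
        have h2' := (hasDerivAt_pow 2 s).div_const 8
        have : (2:ℕ) * s ^ (2 - 1) / 8 = s / 4 := by push_cast; ring
        rwa [this] at h2'
      exact h1.add h2
    exact hpoly.sub hlog
  have hg₁nonneg : 0 ≤ g₁ t := by
    have mono : MonotoneOn g₁ (Set.Ici (0:ℝ)) := by
      apply monotoneOn_of_deriv_nonneg (convex_Ici 0)
      · exact Continuous.continuousOn (by
          fun_prop (disch := exact fun s => (hDpos s).ne'))
      · intro s _
        exact (hg₁deriv s).differentiableAt.differentiableWithinAt
      · intro s hs
        rw [(hg₁deriv s).deriv]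
        exact hg₂nonneg s (le_of_lt (by simpa using hs))
    have h0 : g₁ 0 = 0 := by
      simp [hg₁, hD]
    have := mono Set.self_mem_Ici (Set.mem_Ici.2 ht) ht
    rw [h0] at this
    exact this
  have : Real.log (D t) ≤ t * a + t ^ 2 / 8 := by
    simp only [hg₁] at hg₁nonneg; linarith
  calc D t = Real.exp (Real.log (D t)) := (Real.exp_log (hDpos t)).symm
    _ ≤ Real.exp (t * a + t ^ 2 / 8) := Real.exp_le_exp.2 this


theorem meas_toReal_eq_sum {Ω : Type*} [Fintype Ω] [MeasurableSpace Ω]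
    [MeasurableSingletonClass Ω] (μ : Measure Ω) [IsFiniteMeasure μ] (s : Set Ω)
    [DecidablePred (· ∈ s)] :
    (μ s).toReal = ∑ ω ∈ Finset.univ.filter (· ∈ s), (μ {ω}).toReal := by
  have hs : s = ⋃ x ∈ (Finset.univ.filter (· ∈ s) : Finset Ω), ({x} : Set Ω) := by
    ext x; simp
  conv_lhs => rw [hs]
  rw [measure_biUnion_finset]
  · rw [ENNReal.toReal_sum]
    intro x _; exact (measure_lt_top μ _).ne
  · intro x _ y _ hxy
    simp [Set.disjoint_singleton, hxy]
  · intro x _; exact measurableSet_singleton x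

theorem soundness_parallel_repetition
    {Ω : Type*} [Fintype Ω] [MeasurableSpace Ω] [MeasurableSingletonClass Ω]
    (μ : Measure Ω) [IsProbabilityMeasure μ] (n : ℕ)
    (X : Fin n → Ω → ℕ) (hX : ∀ i ω, X i ω = 0 ∨ X i ω = 1)
    (a b : ℝ) (ha : 0 ≤ a) (hab : a < b) (hb : b ≤ 1)
    (h : ∀ S : Finset (Fin n),
      (μ {ω | ∀ i ∈ S, X i ω = 1}).toReal ≤ a ^ S.card) :
    (μ {ω | (n : ℝ) * (a + b) / 2 ≤ ∑ i, (X i ω : ℝ)}).toReal ≤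
      Real.exp (-(n : ℝ) * (b - a) ^ 2 / 2) := by
  classical
  set t : ℝ := 2 * (b - a) with ht_def
  have ht : 0 < t := by rw [ht_def]; linarith
  set lam : ℝ := Real.exp t - 1 with hlam_def
  have hlam : 0 ≤ lam := by
    have : (1:ℝ) ≤ Real.exp t := Real.one_le_exp ht.le
    rw [hlam_def]; linarith
  set p : Ω → ℝ := fun ω => (μ {ω}).toReal with hp_def
  have hp : ∀ ω, 0 ≤ p ω := fun ω => ENNReal.toReal_nonneg
  set M : ℝ := (n : ℝ) * (a + b) / 2 with hM_def
  -- pointwise identity : product = exp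
  have hprod_exp : ∀ ω, ∏ i, (1 + lam * (X i ω : ℝ))
      = Real.exp (t * ∑ i, (X i ω : ℝ)) := by
    intro ω
    rw [Finset.mul_sum, Real.exp_sum]
    apply Finset.prod_congr rfl
    intro i _
    rcases hX i ω with h0 | h1
    · simp [h0]
    · simp [h1, hlam_def]
  -- expansion of the product into subsets
  have expand : ∀ ω, ∏ i, (1 + lam * (X i ω : ℝ))
      = ∑ S ∈ (Finset.univ : Finset (Fin n)).powerset,
          lam ^ S.card * ∏ i ∈ S, (X i ω : ℝ) := by
    intro ω
    have key := Finset.prod_add (fun i => lam * (X i ω : ℝ)) (fun _ => (1:ℝ))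
      Finset.univ
    simp only [Finset.prod_const_one, mul_one] at key
    have : (∏ i, (1 + lam * (X i ω : ℝ))) = ∏ i, (lam * (X i ω : ℝ) + 1) := by
      apply Finset.prod_congr rfl; intro i _; ring
    rw [this, key]
    apply Finset.sum_congr rfl
    intro S _
    rw [Finset.prod_mul_distrib, Finset.prod_const]
  -- indicator bound per subset
  have hind : ∀ S : Finset (Fin n),
      ∑ ω, p ω * ∏ i ∈ S, (X i ω : ℝ) ≤ a ^ S.card := by
    intro S
    have hprod : ∀ ω, (∏ i ∈ S, (X i ω : ℝ))
        = if (∀ i ∈ S, X i ω = 1) then 1 else 0 := by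
      intro ω
      by_cases hcase : ∀ i ∈ S, X i ω = 1
      · rw [if_pos hcase]
        apply Finset.prod_eq_one
        intro i hi; rw [hcase i hi]; norm_num
      · rw [if_neg hcase]
        push_neg at hcase
        obtain ⟨i, hi, hne⟩ := hcase
        have h0 : X i ω = 0 := (hX i ω).resolve_right hne
        apply Finset.prod_eq_zero hi
        rw [h0]; norm_num
    have : ∑ ω, p ω * ∏ i ∈ S, (X i ω : ℝ)
        = (μ {ω | ∀ i ∈ S, X i ω = 1}).toReal := by
      rw [meas_toReal_eq_sum μ {ω | ∀ i ∈ S, X i ω = 1}, Finset.sum_filter]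
      apply Finset.sum_congr rfl
      intro ω _
      rw [hprod ω]
      by_cases hcase : ∀ i ∈ S, X i ω = 1 <;>
        simp [hcase, Set.mem_setOf_eq, hp_def]
    rw [this]
    exact h S
  -- MGF bound
  have hexp_bound : ∑ ω, p ω * Real.exp (t * ∑ i, (X i ω : ℝ))
      ≤ (1 + lam * a) ^ n := by
    have swap : ∑ ω, p ω * Real.exp (t * ∑ i, (X i ω : ℝ))
        = ∑ S ∈ (Finset.univ : Finset (Fin n)).powerset,
            lam ^ S.card * ∑ ω, p ω * ∏ i ∈ S, (X i ω : ℝ) := by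
      have : ∀ ω, p ω * Real.exp (t * ∑ i, (X i ω : ℝ))
          = ∑ S ∈ (Finset.univ : Finset (Fin n)).powerset,
              lam ^ S.card * (p ω * ∏ i ∈ S, (X i ω : ℝ)) := by
        intro ω
        rw [← hprod_exp ω, expand ω, Finset.mul_sum]
        apply Finset.sum_congr rfl; intro S _; ring
      rw [Finset.sum_congr rfl fun ω _ => this ω, Finset.sum_comm]
      apply Finset.sum_congr rfl; intro S _
      rw [Finset.mul_sum]
    rw [swap]
    have step : ∑ S ∈ (Finset.univ : Finset (Fin n)).powerset,
        lam ^ S.card * ∑ ω, p ω * ∏ i ∈ S, (X i ω : ℝ)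
        ≤ ∑ S ∈ (Finset.univ : Finset (Fin n)).powerset, (lam * a) ^ S.card := by
      apply Finset.sum_le_sum
      intro S _
      rw [mul_pow]
      exact mul_le_mul_of_nonneg_left (hind S) (pow_nonneg hlam _)
    refine step.trans (le_of_eq ?_)
    have key := Finset.prod_add (fun _ : Fin n => lam * a) (fun _ => (1:ℝ))
      Finset.univ
    simp only [Finset.prod_const_one, mul_one, Finset.prod_const,
      Finset.card_univ, Fintype.card_fin] at key
    rw [← key]; ring
  -- Markov step
  set E : Set Ω := {ω | M ≤ ∑ i, (X i ω : ℝ)} with hE_def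
  have markov : Real.exp (t * M) * (μ E).toReal
      ≤ ∑ ω, p ω * Real.exp (t * ∑ i, (X i ω : ℝ)) := by
    rw [meas_toReal_eq_sum μ E, Finset.mul_sum]
    calc ∑ ω ∈ Finset.univ.filter (· ∈ E), Real.exp (t * M) * (μ {ω}).toReal
        ≤ ∑ ω ∈ Finset.univ.filter (· ∈ E), p ω * Real.exp (t * ∑ i, (X i ω : ℝ)) := by
          apply Finset.sum_le_sum
          intro ω hω
          rw [Finset.mem_filter] at hω
          have hM : M ≤ ∑ i, (X i ω : ℝ) := hω.2
          rw [mul_comm]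
          apply mul_le_mul_of_nonneg_left _ (hp ω)
          exact Real.exp_le_exp.2 (mul_le_mul_of_nonneg_left hM ht.le)
      _ ≤ ∑ ω, p ω * Real.exp (t * ∑ i, (X i ω : ℝ)) := by
          apply Finset.sum_le_sum_of_subset_of_nonneg (Finset.filter_subset _ _)
          intro ω _ _
          exact mul_nonneg (hp ω) (Real.exp_pos _).le
  have h1 : Real.exp (t * M) * (μ E).toReal ≤ (1 + lam * a) ^ n :=
    markov.trans hexp_bound
  have ha1 : a ≤ 1 := hab.le.trans hb
  have h2 : (1 + lam * a) ^ n ≤ Real.exp ((n : ℝ) * (t * a + t ^ 2 / 8)) := by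
    have hb1 : 1 + lam * a = 1 - a + a * Real.exp t := by rw [hlam_def]; ring
    have hm := bern_mgf_le a ha ha1 t ht.le
    calc (1 + lam * a) ^ n ≤ (Real.exp (t * a + t ^ 2 / 8)) ^ n := by
          apply pow_le_pow_left₀ (by nlinarith) _ n
          rw [hb1]; exact hm
      _ = Real.exp ((n : ℝ) * (t * a + t ^ 2 / 8)) := (Real.exp_nat_mul _ n).symm
  have h3 : (μ E).toReal ≤ Real.exp ((n : ℝ) * (t * a + t ^ 2 / 8) - t * M) := by
    rw [Real.exp_sub, le_div_iff₀ (Real.exp_pos _)]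
    calc (μ E).toReal * Real.exp (t * M)
        = Real.exp (t * M) * (μ E).toReal := by ring
      _ ≤ (1 + lam * a) ^ n := h1
      _ ≤ _ := h2
  refine h3.trans (le_of_eq ?_)
  congr 1
  rw [ht_def, hM_def]
  ring
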